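/- Under the hypotheses of the previous statement (uniform weights, sorted nonflexible loads, t_0 chosen so that L_{t_0} < L ≤ L_{t_0+1}), the water-filling vector (ℓ_t^*) is the unique minimizer of ∑_t (ℓ_t^0 + ℓ_t)^2 over all (ℓ_t) with ℓ_t ≥ 0 and ∑_t ℓ_t = L. -/

import Mathlib

open Finset

/-- Optimality of the water-filling schedule (Proposition 1, uniform weights,
sorted loads): the water-filling vector is the unique minimizer of
`∑_t (ℓ0 t + ℓ t)^2` over nonnegative schedules summing to `L`. -/
theorem stmt_2 (T : ℕ) (hT : 1 ≤ T) (ℓ0 : ℕ → ℝ) (L : ℝ)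
    (hℓ0 : ∀ t, 0 ≤ ℓ0 t) (hL : 0 < L)
    (hsorted : ∀ s t, s ≤ t → ℓ0 s ≤ ℓ0 t)
    (Lt : ℕ → ℝ) (hLt : ∀ t, Lt t = t * ℓ0 t - ∑ s ∈ Icc 1 t, ℓ0 s)
    (t0 : ℕ) (ht0₁ : 1 ≤ t0) (ht0₂ : t0 ≤ T)
    (hlow : Lt t0 < L) (hhigh : t0 = T ∨ L ≤ Lt (t0 + 1))
    (ℓstar : ℕ → ℝ)
    (hℓstar : ∀ t, ℓstar t =
      if t ≤ t0 then (L + ∑ s ∈ Icc 1 t0, ℓ0 s) / t0 - ℓ0 t else 0) :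
    ∀ ℓ : ℕ → ℝ, (∀ t ∈ Icc 1 T, 0 ≤ ℓ t) → (∑ t ∈ Icc 1 T, ℓ t) = L →
      (∑ t ∈ Icc 1 T, (ℓ0 t + ℓstar t) ^ 2) ≤ ∑ t ∈ Icc 1 T, (ℓ0 t + ℓ t) ^ 2 ∧
      ((∑ t ∈ Icc 1 T, (ℓ0 t + ℓ t) ^ 2) = ∑ t ∈ Icc 1 T, (ℓ0 t + ℓstar t) ^ 2 →
        ∀ t ∈ Icc 1 T, ℓ t = ℓstar t) := by
  intro ℓ hℓpos hsum
  set c : ℝ := (L + ∑ s ∈ Icc 1 t0, ℓ0 s) / t0 with hcdef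
  have ht0pos : (0:ℝ) < (t0:ℝ) := by
    have : 0 < t0 := ht0₁
    exact_mod_cast this
  have hcmul : (t0:ℝ) * c = L + ∑ s ∈ Icc 1 t0, ℓ0 s := by
    rw [hcdef]; field_simp
  have hstar_le : ∀ t, t ≤ t0 → ℓ0 t + ℓstar t = c := by
    intro t h2; rw [hℓstar t, if_pos h2]; ring
  have hstar_gt : ∀ t, t0 < t → ℓstar t = 0 := by
    intro t h; rw [hℓstar t, if_neg (by omega)]
  have hsplit : ∀ g : ℕ → ℝ, ∑ t ∈ Icc 1 T, g t
      = ∑ t ∈ Icc 1 t0, g t + ∑ t ∈ Ioc t0 T, g t := by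
    intro g
    have h1 : Icc 1 T = Ioc 0 T := by rw [← Finset.Icc_add_one_left_eq_Ioc]; rfl
    have h2 : Icc 1 t0 = Ioc 0 t0 := by rw [← Finset.Icc_add_one_left_eq_Ioc]; rfl
    rw [h1, h2, Finset.sum_Ioc_consecutive _ (Nat.zero_le t0) ht0₂]
  have hstar_sum : ∑ t ∈ Icc 1 T, ℓstar t = L := by
    rw [hsplit]
    have h1 : ∑ t ∈ Icc 1 t0, ℓstar t = ∑ t ∈ Icc 1 t0, (c - ℓ0 t) := by
      apply Finset.sum_congr rfl
      intro t ht
      simp only [Finset.mem_Icc] at ht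
      have := hstar_le t ht.2
      linarith
    have h2 : ∑ t ∈ Ioc t0 T, ℓstar t = 0 :=
      Finset.sum_eq_zero fun t ht => hstar_gt t (Finset.mem_Ioc.mp ht).1
    have hcard : (Icc 1 t0).card = t0 := by
      rw [Nat.card_Icc]; omega
    rw [h1, h2, Finset.sum_sub_distrib, Finset.sum_const, hcard, nsmul_eq_mul]
    linarith [hcmul]
  have hc_le : ∀ t, t0 < t → t ≤ T → c ≤ ℓ0 t := by
    intro t h1 h2
    rcases hhigh with h | h
    · omega
    · have hLt1 := hLt (t0+1)
      have hsum1 : ∑ s ∈ Icc 1 (t0+1), ℓ0 s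
          = ∑ s ∈ Icc 1 t0, ℓ0 s + ℓ0 (t0+1) := by
        rw [Finset.sum_Icc_succ_top (by omega : 1 ≤ t0+1)]
      have h3 : L + ∑ s ∈ Icc 1 t0, ℓ0 s ≤ (t0:ℝ) * ℓ0 (t0+1) := by
        rw [hLt1, hsum1] at h
        push_cast at h ⊢
        nlinarith [h]
      have h4 : c ≤ ℓ0 (t0+1) := by
        rw [hcdef, div_le_iff₀ ht0pos]
        linarith
      exact h4.trans (hsorted (t0+1) t (by omega))
  have hd0 : ∑ t ∈ Icc 1 T, (ℓ t - ℓstar t) = 0 := by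
    rw [Finset.sum_sub_distrib, hsum, hstar_sum]; ring
  have key : ∑ t ∈ Icc 1 T, (ℓ0 t + ℓ t)^2
      = ∑ t ∈ Icc 1 T, (ℓ0 t + ℓstar t)^2
        + ∑ t ∈ Icc 1 T, (ℓ t - ℓstar t)^2
        + 2 * ∑ t ∈ Icc 1 T, ((ℓ0 t + ℓstar t - c) * (ℓ t - ℓstar t)) := by
    have expand : ∀ t ∈ Icc 1 T, (ℓ0 t + ℓ t)^2
        = (ℓ0 t + ℓstar t)^2 + (ℓ t - ℓstar t)^2
          + 2*((ℓ0 t + ℓstar t - c)*(ℓ t - ℓstar t)) + (2*c)*(ℓ t - ℓstar t) :=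
      fun t _ => by ring
    rw [Finset.sum_congr rfl expand, Finset.sum_add_distrib,
      Finset.sum_add_distrib, Finset.sum_add_distrib, ← Finset.mul_sum,
      ← Finset.mul_sum, hd0]
    ring
  have hS : 0 ≤ ∑ t ∈ Icc 1 T, ((ℓ0 t + ℓstar t - c) * (ℓ t - ℓstar t)) := by
    rw [hsplit]
    have h1 : ∑ t ∈ Icc 1 t0, ((ℓ0 t + ℓstar t - c) * (ℓ t - ℓstar t)) = 0 := by
      apply Finset.sum_eq_zero
      intro t ht
      simp only [Finset.mem_Icc] at ht
      have := hstar_le t ht.2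
      have : ℓ0 t + ℓstar t - c = 0 := by linarith
      rw [this]; ring
    have h2 : 0 ≤ ∑ t ∈ Ioc t0 T, ((ℓ0 t + ℓstar t - c) * (ℓ t - ℓstar t)) := by
      apply Finset.sum_nonneg
      intro t ht
      simp only [Finset.mem_Ioc] at ht
      have hz := hstar_gt t ht.1
      have hcle := hc_le t ht.1 ht.2
      have hpos := hℓpos t (Finset.mem_Icc.mpr ⟨by omega, ht.2⟩)
      rw [hz]
      nlinarith
    linarith
  have hsq : 0 ≤ ∑ t ∈ Icc 1 T, (ℓ t - ℓstar t)^2 :=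
    Finset.sum_nonneg fun t _ => sq_nonneg _
  constructor
  · linarith
  · intro heq t ht
    have hzero : ∑ t ∈ Icc 1 T, (ℓ t - ℓstar t)^2 = 0 := by linarith
    have := (Finset.sum_eq_zero_iff_of_nonneg (fun t _ => sq_nonneg (ℓ t - ℓstar t))).mp hzero t ht
    have := sq_eq_zero_iff.mp this
    linarith
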